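/- Let f, g : J → ℝ be functions on an open interval J with f strictly concave and strictly decreasing and g strictly concave and strictly decreasing, such that f - g is strictly concave (or strictly convex). Then the equation f(y₀) = g(y₀) has at most two solutions in J. Consequently, if T_L·T_R > 0, the difference y_L - y_R of the two Poincaré half-maps of the piecewise linear system is strictly concave or strictly convex, and the system has at most two limit cycles. -/

import Mathlib

open Set

lemma key_zero {l r : ℝ} {h : ℝ → ℝ} (hc : StrictConcaveOn ℝ (Set.Ioo l r) h)
    {a b c : ℝ} (ha : a ∈ Set.Ioo l r) (hcc : c ∈ Set.Ioo l r)
    (hab : a < b) (hbc : b < c) (h0a : h a = 0) (h0c : h c = 0) : 0 < h b := by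
  set t : ℝ := (c - b) / (c - a) with ht
  have hca : 0 < c - a := by linarith
  have hcb : 0 < c - b := by linarith
  have ht0 : 0 < t := by positivity
  have ht1 : 0 < 1 - t := by
    rw [ht]; rw [sub_pos, div_lt_one hca]; linarith
  have hb : t • a + (1 - t) • c = b := by
    have h' : t * (c - a) = c - b := by rw [ht]; exact div_mul_cancel₀ _ hca.ne'
    simp only [smul_eq_mul]; linear_combination -h'
  have := hc.2 ha hcc (by linarith : a ≠ c) ht0 ht1 (by ring)
  rw [hb, h0a, h0c] at this
  simpa using this

theorem at_most_two_intersections (l r : ℝ) (f g : ℝ → ℝ)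
    (hf : StrictConcaveOn ℝ (Set.Ioo l r) f) (hf' : StrictAntiOn f (Set.Ioo l r))
    (hg : StrictConcaveOn ℝ (Set.Ioo l r) g) (hg' : StrictAntiOn g (Set.Ioo l r))
    (hfg : StrictConcaveOn ℝ (Set.Ioo l r) (f - g) ∨
           StrictConvexOn ℝ (Set.Ioo l r) (f - g)) :
    {y₀ ∈ Set.Ioo l r | f y₀ = g y₀}.encard ≤ 2 := by
  by_contra hlt
  push_neg at hlt
  have h3 : (3:ℕ∞) ≤ {y₀ | y₀ ∈ Set.Ioo l r ∧ f y₀ = g y₀}.encard := Order.add_one_le_of_lt hlt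
  obtain ⟨t, hts, htc⟩ := Set.exists_subset_encard_eq h3
  rw [Set.encard_eq_three] at htc
  obtain ⟨a, b, c, hab, hac, hbc, rfl⟩ := htc
  have ha := hts (by simp : a ∈ ({a,b,c} : Set ℝ))
  have hb := hts (by simp : b ∈ ({a,b,c} : Set ℝ))
  have hc := hts (by simp : c ∈ ({a,b,c} : Set ℝ))
  obtain ⟨haI, haz⟩ := ha
  obtain ⟨hbI, hbz⟩ := hb
  obtain ⟨hcI, hcz⟩ := hc
  -- zeros of f - g
  have haz' : (f - g) a = 0 := by simp [haz]
  have hbz' : (f - g) b = 0 := by simp [hbz]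
  have hcz' : (f - g) c = 0 := by simp [hcz]
  -- WLOG get ordered triple x < y < z among a,b,c, all in Ioo with zero
  have key : ∀ x y z : ℝ, x ∈ Set.Ioo l r → y ∈ Set.Ioo l r → z ∈ Set.Ioo l r →
      x < y → y < z → (f - g) x = 0 → (f - g) y = 0 → (f - g) z = 0 → False := by
    intro x y z hx hy hz hxy hyz h1 h2 h3
    rcases hfg with hcc | hcv
    · have := key_zero hcc hx hz hxy hyz h1 h3
      rw [h2] at this; exact lt_irrefl 0 this
    · have := key_zero hcv.neg hx hz hxy hyz (by simp [h1]) (by simp [h3])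
      rw [Pi.neg_apply, h2] at this; simp at this
  rcases lt_trichotomy a b with h1 | h1 | h1
  · rcases lt_trichotomy b c with h2 | h2 | h2
    · exact key a b c haI hbI hcI h1 h2 haz' hbz' hcz'
    · exact hbc h2
    · rcases lt_trichotomy a c with h3 | h3 | h3
      · exact key a c b haI hcI hbI h3 h2 haz' hcz' hbz'
      · exact hac h3
      · exact key c a b hcI haI hbI h3 h1 hcz' haz' hbz'
  · exact hab h1
  · rcases lt_trichotomy a c with h2 | h2 | h2
    · exact key b a c hbI haI hcI h1 h2 hbz' haz' hcz'
    · exact hac h2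
    · rcases lt_trichotomy b c with h3 | h3 | h3
      · exact key b c a hbI hcI haI h3 h2 hbz' hcz' haz'
      · exact hbc h3
      · exact key c b a hcI hbI haI h3 h1 hcz' hbz' haz'
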